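/- Let n ≥ 2, m ≤ n+1, and let f be a vertex of K_m^{M(M(K_n))} such that both f_{0,0} and f_{1,0} are injective on [n], Im f_{0,0} = Im f_{1,0}, and f(w_0) ∉ Im f_{0,0}. Then f has no neighbors in the induced subgraph G of K_m^{M(M(K_n))} on vertices g for which each g_{i,j} (i,j ∈ {0,1}) is constant or injective. -/

import Mathlib

/-- A finite graph in the sense of the paper: a symmetric adjacency relation,
loops are allowed. -/
structure SGraph (V : Type) where
  Adj : V → V → Prop
  symm : ∀ {u v}, Adj u v → Adj v u

namespace SGraph

variable {α β : Type}

/-- The complete graph `K_m` on vertex set `Fin m`. -/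
def completeG (m : ℕ) : SGraph (Fin m) :=
  ⟨fun i j => i ≠ j, fun h => h.symm⟩

/-- `f` is a graph homomorphism from `G` to `H`. -/
def IsHom (G : SGraph α) (H : SGraph β) (f : α → β) : Prop :=
  ∀ ⦃u v⦄, G.Adj u v → H.Adj (f u) (f v)

/-- `G` admits a proper coloring with `n` colors. -/
def Colorable (G : SGraph α) (n : ℕ) : Prop :=
  ∃ f : α → Fin n, G.IsHom (completeG n) f

/-- The chromatic number of `G`, as an extended natural number. -/
noncomputable def chromNum (G : SGraph α) : ℕ∞ :=
  sInf ((fun k : ℕ => (k : ℕ∞)) '' {k | G.Colorable k})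

/-- The neighborhood of a vertex. -/
def neighborSet (G : SGraph α) (v : α) : Set α := {w | G.Adj v w}

/-- The categorical product `G × H`. -/
def tensor (G : SGraph α) (H : SGraph β) : SGraph (α × β) :=
  ⟨fun p q => G.Adj p.1 q.1 ∧ H.Adj p.2 q.2, fun h => ⟨G.symm h.1, H.symm h.2⟩⟩

/-- The exponential graph `K_m^G`: vertices are all set maps `V(G) → [m]`,
and `f` is adjacent to `g` iff `f u ≠ g v` for every edge `(u,v)` of `G`
(loops are allowed). -/
def expG (G : SGraph α) (m : ℕ) : SGraph (α → Fin m) :=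
  ⟨fun f g => ∀ u v, G.Adj u v → f u ≠ g v,
   fun {f g} h u v huv e => h v u (G.symm huv) e.symm⟩

/-- `G` is connected: nonempty and any two vertices are joined by a walk. -/
def Connected (G : SGraph α) : Prop :=
  Nonempty α ∧ ∀ u v : α, Relation.ReflTransGen G.Adj u v

/-- Property `P` of the paper: `G` is simple, and for any two disjoint edges
`(v1,w1)` and `(v2,w2)`, if `(v2,v1)` is an edge then `(w2,v1)` or `(w2,w1)`
is an edge. -/
def PropertyP (G : SGraph α) : Prop :=
  (∀ v, ¬ G.Adj v v) ∧
  ∀ ⦃v1 w1 v2 w2 : α⦄, G.Adj v1 w1 → G.Adj v2 w2 →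
    v1 ≠ v2 → v1 ≠ w2 → w1 ≠ v2 → w1 ≠ w2 →
    G.Adj v2 v1 → (G.Adj w2 v1 ∨ G.Adj w2 w1)

/-- Base (unsymmetrized) relation for the Mycielskian:
level-0 copies are adjacent as in `G`, a level-1 vertex is adjacent to the
level-0 copies of the neighbours of its shadow, and the apex `none` is
adjacent to all level-1 vertices. -/
def mycRel (G : SGraph α) : Option (α × Bool) → Option (α × Bool) → Prop
  | some (a, false), some (b, false) => G.Adj a b
  | some (a, true), some (b, false) => G.Adj a b
  | none, some (_, true) => True
  | _, _ => False

/-- The Mycielskian `M(G)`. -/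
def myc (G : SGraph α) : SGraph (Option (α × Bool)) :=
  ⟨fun u v => G.mycRel u v ∨ G.mycRel v u, fun h => h.symm⟩

/-- The double Mycielskian `M(M(K_n))`. -/
def MMK (n : ℕ) : SGraph (Option (Option (Fin n × Bool) × Bool)) :=
  myc (myc (completeG n))

/-- The vertex `(x, i, j)` of `M(M(K_n))`. -/
def vtx {n : ℕ} (x : Fin n) (i j : Bool) : Option (Option (Fin n × Bool) × Bool) :=
  some (some (x, i), j)

/-- The vertex `w_i = (*, i)` of `M(M(K_n))` for `i ∈ {0,1}`. -/
def wv (n : ℕ) (i : Bool) : Option (Option (Fin n × Bool) × Bool) :=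
  some (none, i)

/-- The apex vertex `w_2` of `M(M(K_n))`. -/
def w2 (n : ℕ) : Option (Option (Fin n × Bool) × Bool) := none

end SGraph


namespace Graph

open SGraph

lemma aux_outside_eq {n m : ℕ} (hmn : m ≤ n + 1) (u : Fin n → Fin m)
    (hu : Function.Injective u) {a b : Fin m}
    (ha : a ∉ Set.range u) (hb : b ∉ Set.range u) : a = b := by
  by_contra hab
  have hbmem : b ∉ Finset.image u Finset.univ := by
    simp only [Finset.mem_image]
    rintro ⟨x, -, hx⟩; exact hb ⟨x, hx⟩
  have hamem : a ∉ insert b (Finset.image u Finset.univ) := by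
    simp only [Finset.mem_insert, Finset.mem_image]
    rintro (h | ⟨x, -, hx⟩)
    · exact hab h
    · exact ha ⟨x, hx⟩
  have hcard : (insert a (insert b (Finset.image u Finset.univ))).card = n + 2 := by
    rw [Finset.card_insert_of_notMem hamem, Finset.card_insert_of_notMem hbmem,
      Finset.card_image_of_injective _ hu, Finset.card_univ, Fintype.card_fin]
  have := Finset.card_le_univ (insert a (insert b (Finset.image u Finset.univ)))
  rw [hcard] at this
  simp only [Finset.card_univ, Fintype.card_fin] at this
  omega

/-- Lemma 3.11(i) of the paper: let `f` be a vertex of `K_m^{M(M(K_n))}`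
such that `f_{0,0}` and `f_{1,0}` are injective on `[n]`, with equal images,
and `f(w_0) ∉ Im f_{0,0}`. Then `f` has no neighbor among the vertices `g`
all of whose layer maps `g_{i,j}` are constant or injective. -/
theorem no_neighbor_in_folded_subgraph (n m : ℕ) (hn : 2 ≤ n) (hm : 0 < m)
    (hmn : m ≤ n + 1)
    (f : Option (Option (Fin n × Bool) × Bool) → Fin m)
    (h00 : Function.Injective fun x : Fin n => f (vtx x false false))
    (h10 : Function.Injective fun x : Fin n => f (vtx x true false))
    (hIm : Set.range (fun x : Fin n => f (vtx x false false)) =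
      Set.range (fun x : Fin n => f (vtx x true false)))
    (hw : f (wv n false) ∉ Set.range (fun x : Fin n => f (vtx x false false))) :
    ∀ g : Option (Option (Fin n × Bool) × Bool) → Fin m,
      (∀ i j : Bool, (∃ c, ∀ x : Fin n, g (vtx x i j) = c) ∨
        Function.Injective fun x : Fin n => g (vtx x i j)) →
      ¬ (expG (MMK n) m).Adj f g := by
  intro g _ hAdj
  -- anything outside the range of f₀₀ equals f(w₀)
  have key : ∀ a : Fin m, a ∉ Set.range (fun x : Fin n => f (vtx x false false)) →
      a = f (wv n false) := fun a ha => aux_outside_eq hmn _ h00 ha hw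
  -- Step A : g(w₁) = f(w₀)
  have hA : g (wv n true) = f (wv n false) := by
    apply key
    rw [hIm]
    rintro ⟨y, hy⟩
    exact hAdj (vtx y true false) (wv n true) (Or.inr (Or.inl trivial)) hy
  -- Step B : g(x,1,1) = f₀₀(x)
  have hB : ∀ x : Fin n, g (vtx x true true) = f (vtx x false false) := by
    intro x
    by_contra hne
    have h2 : f (wv n false) ≠ g (vtx x true true) :=
      hAdj (wv n false) (vtx x true true) (Or.inr (Or.inr trivial))
    apply h2
    symm
    apply key
    rintro ⟨y, hy⟩
    by_cases hxy : y = x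
    · exact hne (by rw [← hy, hxy])
    · exact hAdj (vtx y false false) (vtx x true true)
        (Or.inr (Or.inl (fun h => hxy h.symm)))
        hy
  -- Step C : f(w₂) = f(w₀)
  have hC : f (w2 n) = f (wv n false) := by
    apply key
    rintro ⟨x, hx⟩
    exact hAdj (w2 n) (vtx x true true) (Or.inl trivial) (hx.symm.trans (hB x).symm)
  -- Step D : edge w₂ ~ w₁ gives the contradiction
  exact hAdj (w2 n) (wv n true) (Or.inl trivial) (hC.trans hA.symm)

end Graph
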